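/- Fix q ∈ ℂ with q ≠ 0 and q not a root of unity, an integer n ≥ 1, and set c(n) = −1/(qⁿ + q⁻ⁿ)². Let (e₋₁, e₁, A) be a Podleś representation with parameter c(n) on a finite-dimensional complex vector space V such that A is invertible. Then A is diagonalizable and every eigenvalue of A belongs to the set {q^{n−2k}/(qⁿ + q⁻ⁿ) : k = 1, 2, …, n}. -/

import Mathlib

/-- A Podleś representation with parameter `c` on a complex vector space. -/
def PodlesRep (q c : ℂ) {V : Type*} [AddCommGroup V] [Module ℂ V]
    (em e1 A : Module.End ℂ V) : Prop :=
  em * e1 = A - A ^ 2 + c • (1 : Module.End ℂ V) ∧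
  e1 * em = q ^ 2 • A - q ^ 4 • A ^ 2 + c • (1 : Module.End ℂ V) ∧
  e1 * A = q ^ 2 • (A * e1) ∧
  em * A = (q ^ 2)⁻¹ • (A * em)

/-- In a finite-dimensional Podleś representation with parameter `c(n) = −1/(qⁿ+q⁻ⁿ)²`
with invertible `A`, the operator `A` is diagonalizable (the sum of its eigenspaces is the whole
space) and every eigenvalue of `A` is of the form `q^(n−2k)/(qⁿ+q⁻ⁿ)` for some `1 ≤ k ≤ n`. -/
theorem stmt5 {V : Type*} [AddCommGroup V] [Module ℂ V] [FiniteDimensional ℂ V]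
    (q : ℂ) (hq : q ≠ 0) (hq' : ∀ k : ℕ, 0 < k → q ^ k ≠ 1)
    (n : ℕ) (hn : 1 ≤ n)
    (em e1 A : Module.End ℂ V)
    (hrep : PodlesRep q (-1 / (q ^ (n : ℤ) + q ^ (-(n : ℤ))) ^ 2) em e1 A)
    (hA : Function.Bijective ⇑A) :
    (⨆ μ : ℂ, Module.End.eigenspace A μ) = ⊤ ∧
    ∀ μ : ℂ, Module.End.HasEigenvalue A μ →
      ∃ k : ℕ, 1 ≤ k ∧ k ≤ n ∧
        μ = q ^ ((n : ℤ) - 2 * (k : ℤ)) / (q ^ (n : ℤ) + q ^ (-(n : ℤ))) := by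
  classical
  obtain ⟨h1, h2, h3, h4⟩ := hrep
  have hq2 : q ^ 2 ≠ 0 := pow_ne_zero _ hq
  have hq4 : q ^ 4 ≠ 0 := pow_ne_zero _ hq
  -- q is not a root of unity, integer version
  have hz : ∀ m : ℤ, q ^ m = 1 → m = 0 := by
    have hpos : ∀ m : ℤ, 0 < m → q ^ m ≠ 1 := by
      intro m hm
      lift m to ℕ using hm.le
      rw [zpow_natCast]
      exact hq' m (by exact_mod_cast hm)
    intro m hm
    rcases lt_trichotomy m 0 with h | h | h
    · exfalso
      apply hpos (-m) (by omega)
      rw [zpow_neg, hm, inv_one]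
    · exact h
    · exact absurd hm (hpos m h)
  set t : ℂ := q ^ (n : ℤ) with ht_def
  have ht0 : t ≠ 0 := zpow_ne_zero _ hq
  set s : ℂ := t + q ^ (-(n : ℤ)) with hs_def
  have hts : s = t + t⁻¹ := by rw [hs_def, zpow_neg, ht_def]
  have hs0 : s ≠ 0 := by
    intro h
    rw [hts] at h
    have h2' : t * t = -1 := by
      field_simp at h
      linear_combination h
    have h4' : q ^ ((4 * n : ℕ) : ℤ) = 1 := by
      have hc4 : ((4 * n : ℕ) : ℤ) = (n:ℤ) + (n:ℤ) + ((n:ℤ) + (n:ℤ)) := by push_cast; ring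
      rw [hc4, zpow_add₀ hq, zpow_add₀ hq, ← ht_def, h2']
      ring
    have := hz _ h4'
    omega
  set c : ℂ := -1 / s ^ 2 with hc_def
  have ht1 : t ^ 2 + 1 ≠ 0 := by
    intro h
    apply hs0
    rw [hts]
    field_simp
    linear_combination h
  have hs2 : s = (t^2+1)/t := by rw [hts]; field_simp
  set lam : ℤ → ℂ := fun m => q ^ ((n : ℤ) - 2 * m) / s with hlam
  have hlam_ne : ∀ m : ℤ, lam m ≠ 0 := fun m => div_ne_zero (zpow_ne_zero _ hq) hs0
  have hlam_inj : ∀ a b : ℤ, lam a = lam b → a = b := by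
    intro a b hab
    simp only [hlam] at hab
    rw [div_eq_div_iff hs0 hs0] at hab
    have heq : q ^ ((n:ℤ) - 2*a) = q ^ ((n:ℤ) - 2*b) := mul_right_cancel₀ hs0 hab
    have h1' : q ^ (((n:ℤ) - 2*a) - ((n:ℤ) - 2*b)) = 1 := by
      rw [zpow_sub₀ hq, heq, div_self (zpow_ne_zero _ hq)]
    have := hz _ h1'
    omega
  have hlam_shift : ∀ (a : ℤ) (j : ℕ), (q ^ 2) ^ j * lam (a + j) = lam a := by
    intro a j
    simp only [hlam]
    rw [mul_div_assoc']
    congr 1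
    rw [← pow_mul, ← zpow_natCast q (2 * j), ← zpow_add₀ hq]
    congr 1
    push_cast
    ring
  have z2 : q ^ (2 : ℤ) = q ^ 2 := by
    rw [show (2:ℤ) = ((2:ℕ):ℤ) by norm_num, zpow_natCast]
  have e_lam0 : lam 0 = t / s := by
    simp only [hlam, ht_def]
    norm_num
  have e_lamn : lam (n:ℤ) = t⁻¹ / s := by
    simp only [hlam, ht_def]
    rw [show (n:ℤ) - 2*(n:ℤ) = -(n:ℤ) by ring, zpow_neg]
  have e_lam1 : lam 1 = t / q ^ 2 / s := by
    simp only [hlam, ht_def]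
    rw [show (n:ℤ) - 2*1 = (n:ℤ) - 2 by ring, zpow_sub₀ hq, z2]
  have e_lamn1 : lam ((n:ℤ)+1) = t⁻¹ / q ^ 2 / s := by
    simp only [hlam, ht_def]
    rw [show (n:ℤ) - 2*((n:ℤ)+1) = -(n:ℤ) - 2 by ring, zpow_sub₀ hq, z2, zpow_neg]
  have root_f : ∀ x : ℂ, q^2*x - q^4*x^2 + c = 0 ↔ (x = lam 1 ∨ x = lam ((n:ℤ)+1)) := by
    intro x
    have hfact : q^2*x - q^4*x^2 + c = (-q^4) * (x - lam 1) * (x - lam ((n:ℤ)+1)) := by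
      rw [e_lam1, e_lamn1, hc_def, hs2]
      field_simp [ht1]
      ring
    rw [hfact, mul_eq_zero, mul_eq_zero, sub_eq_zero, sub_eq_zero]
    simp only [neg_eq_zero, hq4, false_or]
  have root_g : ∀ x : ℂ, x - x^2 + c = 0 ↔ (x = lam 0 ∨ x = lam (n:ℤ)) := by
    intro x
    have hfact : x - x^2 + c = (-1) * (x - lam 0) * (x - lam (n:ℤ)) := by
      rw [e_lam0, e_lamn, hc_def, hs2]
      field_simp [ht1]
      ring
    rw [hfact, mul_eq_zero, mul_eq_zero, sub_eq_zero, sub_eq_zero]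
    simp only [neg_eq_zero, one_ne_zero, false_or]
  have hsum : lam 1 + lam ((n:ℤ)+1) = (q^2)⁻¹ := by
    rw [e_lam1, e_lamn1, hs2]
    field_simp
  have hprod : lam 1 * lam ((n:ℤ)+1) = -c / q^4 := by
    rw [e_lam1, e_lamn1, hc_def, hs2]
    field_simp
  -- pointwise forms of the relations
  have hA2 : ∀ w : V, (A ^ 2) w = A (A w) := by
    intro w; rw [pow_two]; rfl
  have he1em : ∀ w : V, e1 (em w) = q^2 • A w - q^4 • A (A w) + c • w := by
    intro w
    have h := congrArg (fun (T : Module.End ℂ V) => T w) h2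
    simpa [Module.End.mul_apply, LinearMap.add_apply, LinearMap.sub_apply,
      LinearMap.smul_apply, Module.End.one_apply, hA2] using h
  have heme1 : ∀ w : V, em (e1 w) = A w - A (A w) + c • w := by
    intro w
    have h := congrArg (fun (T : Module.End ℂ V) => T w) h1
    simpa [Module.End.mul_apply, LinearMap.add_apply, LinearMap.sub_apply,
      LinearMap.smul_apply, Module.End.one_apply, hA2] using h
  have hAem : ∀ w : V, A (em w) = q^2 • em (A w) := by
    intro w
    have h := congrArg (fun (T : Module.End ℂ V) => T w) h4
    simp only [Module.End.mul_apply, LinearMap.smul_apply] at h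
    rw [h, smul_smul, mul_inv_cancel₀ hq2, one_smul]
  have hAe1 : ∀ w : V, A (e1 w) = (q^2)⁻¹ • e1 (A w) := by
    intro w
    have h := congrArg (fun (T : Module.End ℂ V) => T w) h3
    simp only [Module.End.mul_apply, LinearMap.smul_apply] at h
    rw [h, smul_smul, inv_mul_cancel₀ hq2, one_smul]
  -- zero is not an eigenvalue
  have hev0 : ¬ A.HasEigenvalue 0 := by
    intro h
    obtain ⟨v, hv⟩ := h.exists_hasEigenvector
    have : A v = 0 := by rw [hv.apply_eq_smul, zero_smul]
    exact hv.2 (hA.injective (by rw [this, map_zero]))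
  -- finiteness of the set of eigenvalues
  have hfin : Set.Finite {μ : ℂ | A.HasEigenvalue μ} := by
    apply Set.Finite.subset
      (Polynomial.finite_setOf_isRoot (minpoly.ne_zero (Algebra.IsIntegral.isIntegral A)))
    intro μ hμ
    exact Module.End.isRoot_of_hasEigenvalue hμ
  have hpow_inj : ∀ i j : ℕ, (q^2 : ℂ)^i = (q^2)^j → i = j := by
    intro i j hij
    have h1' : q ^ ((2*i:ℕ):ℤ) = q ^ ((2*j:ℕ):ℤ) := by
      rw [zpow_natCast, zpow_natCast, pow_mul, pow_mul]
      exact hij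
    have h2' : q ^ (((2*i:ℕ):ℤ) - ((2*j:ℕ):ℤ)) = 1 := by
      rw [zpow_sub₀ hq, h1', div_self (zpow_ne_zero _ hq)]
    have := hz _ h2'
    omega
  -- eigenvector raising and lowering
  have step_up : ∀ μ : ℂ, A.HasEigenvalue μ → q^2*μ - q^4*μ^2 + c ≠ 0 →
      A.HasEigenvalue (q^2*μ) := by
    intro μ hμ hF
    obtain ⟨v, hv⟩ := hμ.exists_hasEigenvector
    have hAv : A v = μ • v := hv.apply_eq_smul
    have hAAv : A (A v) = (μ*μ) • v := by rw [hAv, map_smul, hAv, smul_smul]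
    have hcomb : e1 (em v) = (q^2*μ - q^4*μ^2 + c) • v := by
      rw [he1em, hAAv, hAv]
      module
    have hnz : em v ≠ 0 := by
      intro h0
      rw [h0, map_zero] at hcomb
      rcases smul_eq_zero.mp hcomb.symm with h | h
      · exact hF h
      · exact hv.2 h
    have hvec : A (em v) = (q^2*μ) • em v := by
      rw [hAem, hAv, map_smul, smul_smul]
    exact Module.End.hasEigenvalue_of_hasEigenvector
      ⟨Module.End.mem_eigenspace_iff.mpr hvec, hnz⟩
  have step_down : ∀ μ : ℂ, A.HasEigenvalue μ → μ - μ^2 + c ≠ 0 →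
      A.HasEigenvalue ((q^2)⁻¹*μ) := by
    intro μ hμ hF
    obtain ⟨v, hv⟩ := hμ.exists_hasEigenvector
    have hAv : A v = μ • v := hv.apply_eq_smul
    have hAAv : A (A v) = (μ*μ) • v := by rw [hAv, map_smul, hAv, smul_smul]
    have hcomb : em (e1 v) = (μ - μ^2 + c) • v := by
      rw [heme1, hAAv, hAv]
      module
    have hnz : e1 v ≠ 0 := by
      intro h0
      rw [h0, map_zero] at hcomb
      rcases smul_eq_zero.mp hcomb.symm with h | h
      · exact hF h
      · exact hv.2 h
    have hvec : A (e1 v) = ((q^2)⁻¹*μ) • e1 v := by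
      rw [hAe1, hAv, map_smul, smul_smul]
    exact Module.End.hasEigenvalue_of_hasEigenvector
      ⟨Module.End.mem_eigenspace_iff.mpr hvec, hnz⟩
  -- the chains terminate
  have chain_up : ∀ μ : ℂ, μ ≠ 0 → A.HasEigenvalue μ →
      ∃ j : ℕ, (q^2)^j * μ = lam 1 ∨ (q^2)^j * μ = lam ((n:ℤ)+1) := by
    intro μ hμ0 hμ
    by_contra hcon
    push_neg at hcon
    have hall : ∀ j : ℕ, A.HasEigenvalue ((q^2)^j * μ) := by
      intro j
      induction j with
      | zero => simpa using hμ
      | succ j ih =>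
        have hFne : q^2*((q^2)^j*μ) - q^4*((q^2)^j*μ)^2 + c ≠ 0 := by
          intro h0
          rcases (root_f _).mp h0 with h | h
          · exact (hcon j).1 h
          · exact (hcon j).2 h
        have := step_up _ ih hFne
        have he : q^2 * ((q^2)^j*μ) = (q^2)^(j+1)*μ := by ring
        rwa [he] at this
    have hinj : Function.Injective (fun j : ℕ => (q^2:ℂ)^j * μ) := by
      intro i j hij
      exact hpow_inj i j (mul_right_cancel₀ hμ0 hij)
    exact Set.not_infinite.mpr hfin (Set.infinite_of_injective_forall_mem hinj hall)
  have chain_down : ∀ μ : ℂ, μ ≠ 0 → A.HasEigenvalue μ →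
      ∃ j : ℕ, ((q^2)⁻¹)^j * μ = lam 0 ∨ ((q^2)⁻¹)^j * μ = lam (n:ℤ) := by
    intro μ hμ0 hμ
    by_contra hcon
    push_neg at hcon
    have hall : ∀ j : ℕ, A.HasEigenvalue (((q^2)⁻¹)^j * μ) := by
      intro j
      induction j with
      | zero => simpa using hμ
      | succ j ih =>
        have hFne : ((q^2)⁻¹)^j*μ - (((q^2)⁻¹)^j*μ)^2 + c ≠ 0 := by
          intro h0
          rcases (root_g _).mp h0 with h | h
          · exact (hcon j).1 h
          · exact (hcon j).2 h
        have := step_down _ ih hFne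
        have he : (q^2)⁻¹ * (((q^2)⁻¹)^j*μ) = ((q^2)⁻¹)^(j+1)*μ := by ring
        rwa [he] at this
    have hinj : Function.Injective (fun j : ℕ => ((q^2:ℂ)⁻¹)^j * μ) := by
      intro i j hij
      simp only at hij
      have := mul_right_cancel₀ hμ0 hij
      rw [inv_pow, inv_pow, inv_inj] at this
      exact hpow_inj i j this
    exact Set.not_infinite.mpr hfin (Set.infinite_of_injective_forall_mem hinj hall)
  have hq2pow : ∀ j : ℕ, ((q:ℂ)^2)^j ≠ 0 := fun j => pow_ne_zero _ hq2
  -- classification of eigenvalues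
  have evals : ∀ μ : ℂ, A.HasEigenvalue μ → ∃ a : ℤ, 1 ≤ a ∧ a ≤ (n:ℤ) ∧ μ = lam a := by
    intro μ hμ
    have hμ0 : μ ≠ 0 := fun h => hev0 (h ▸ hμ)
    obtain ⟨j1, hup⟩ := chain_up μ hμ0 hμ
    obtain ⟨j2, hdn⟩ := chain_down μ hμ0 hμ
    have h_up : ∃ a : ℤ, 1 ≤ a ∧ μ = lam a := by
      rcases hup with h | h
      · refine ⟨1 + j1, by omega, ?_⟩
        apply mul_left_cancel₀ (hq2pow j1)
        rw [hlam_shift 1 j1, ← h]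
      · refine ⟨(n:ℤ) + 1 + j1, by omega, ?_⟩
        apply mul_left_cancel₀ (hq2pow j1)
        rw [hlam_shift ((n:ℤ)+1) j1, ← h]
    have h_dn : ∃ b : ℤ, b ≤ (n:ℤ) ∧ μ = lam b := by
      rcases hdn with h | h
      · refine ⟨0 - j2, by omega, ?_⟩
        have : μ = (q^2)^j2 * lam 0 := by
          rw [← h, ← mul_assoc, ← mul_pow, mul_inv_cancel₀ hq2, one_pow, one_mul]
        have hs' := hlam_shift (0 - (j2:ℤ)) j2
        rw [show (0:ℤ) - (j2:ℤ) + (j2:ℤ) = 0 from by omega] at hs'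
        rw [this, ← hs']
      · refine ⟨(n:ℤ) - j2, by omega, ?_⟩
        have : μ = (q^2)^j2 * lam (n:ℤ) := by
          rw [← h, ← mul_assoc, ← mul_pow, mul_inv_cancel₀ hq2, one_pow, one_mul]
        have hs' := hlam_shift ((n:ℤ) - (j2:ℤ)) j2
        rw [show (n:ℤ) - (j2:ℤ) + (j2:ℤ) = (n:ℤ) from by omega] at hs'
        rw [this, ← hs']
    obtain ⟨a, ha, hμa⟩ := h_up
    obtain ⟨b, hb, hμb⟩ := h_dn
    have hab : a = b := hlam_inj _ _ (by rw [← hμa, ← hμb])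
    exact ⟨a, ha, by omega, hμa⟩
  -- elementwise generalized eigenvector machinery
  have hsub : ∀ (μ : ℂ) (w : V), (A - μ • (1 : Module.End ℂ V)) w = A w - μ • w := by
    intro μ w
    simp [LinearMap.sub_apply, LinearMap.smul_apply, Module.End.one_apply]
  have happly : ∀ (p : Module.End ℂ V) (m : ℕ) (w : V), (p^(m+1)) w = (p^m) (p w) := by
    intro p m w
    rw [pow_succ]
    rfl
  have happly' : ∀ (p : Module.End ℂ V) (m : ℕ) (w : V), (p^(m+1)) w = p ((p^m) w) := by
    intro p m w
    rw [pow_succ']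
    rfl
  have keyL : ∀ (B : Module.End ℂ V) (μ : ℂ), (∀ w, B (A w) = A (B w)) →
      (∀ u : V, A u = μ • u → B u = 0 → u = 0) →
      ∀ (m : ℕ) (w : V), ((A - μ • (1:Module.End ℂ V))^m) w = 0 → B w = 0 → w = 0 := by
    intro B μ hcomm hbeta m
    induction m with
    | zero => intro w hw _; simpa using hw
    | succ m ih =>
      intro w hw hBw
      have hw' : ((A - μ • (1:Module.End ℂ V))^m) ((A - μ • 1) w) = 0 := by
        rw [← happly]
        exact hw
      have hBw' : B ((A - μ • (1:Module.End ℂ V)) w) = 0 := by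
        rw [hsub, map_sub, map_smul, hcomm, hBw, map_zero, smul_zero, sub_zero]
      have h0 : (A - μ • (1:Module.End ℂ V)) w = 0 := ih _ hw' hBw'
      rw [hsub, sub_eq_zero] at h0
      exact hbeta w h0 hBw
  have no_eig_zero : ∀ μ : ℂ, ¬ A.HasEigenvalue μ →
      ∀ (m:ℕ) (w : V), ((A - μ • (1:Module.End ℂ V))^m) w = 0 → w = 0 := by
    intro μ hμ m
    induction m with
    | zero => intro w hw; simpa using hw
    | succ m ih =>
      intro w hw
      have hw' : ((A - μ • (1:Module.End ℂ V))^m) ((A - μ • 1) w) = 0 := by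
        rw [← happly]
        exact hw
      have h0 : (A - μ • (1:Module.End ℂ V)) w = 0 := ih _ hw'
      rw [hsub, sub_eq_zero] at h0
      by_contra hw0
      exact hμ (Module.End.hasEigenvalue_of_hasEigenvector
        ⟨Module.End.mem_eigenspace_iff.mpr h0, hw0⟩)
  have em_pow : ∀ (μ : ℂ) (m : ℕ) (w : V),
      ((A - (q^2*μ) • (1:Module.End ℂ V))^m) (em w)
        = (q^2)^m • em (((A - μ • (1:Module.End ℂ V))^m) w) := by
    intro μ m
    induction m with
    | zero => intro w; simp
    | succ m ih =>
      intro w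
      have hstep : (A - (q^2*μ) • (1:Module.End ℂ V)) (em w)
          = q^2 • em ((A - μ • (1:Module.End ℂ V)) w) := by
        rw [hsub, hsub, hAem, map_sub, map_smul]
        module
      calc ((A - (q^2*μ) • (1:Module.End ℂ V))^(m+1)) (em w)
          = ((A - (q^2*μ) • (1:Module.End ℂ V))^m) ((A - (q^2*μ) • 1) (em w)) :=
            happly _ m (em w)
        _ = q^2 • ((A - (q^2*μ) • (1:Module.End ℂ V))^m) (em ((A - μ • 1) w)) := by
            rw [hstep, map_smul]
        _ = q^2 • ((q^2)^m • em (((A - μ • (1:Module.End ℂ V))^m) ((A - μ • 1) w))) := by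
            rw [ih]
        _ = (q^2)^(m+1) • em (((A - μ • (1:Module.End ℂ V))^(m+1)) w) := by
            rw [smul_smul, ← pow_succ', ← happly]
  have hlam0_ne : ¬ A.HasEigenvalue (lam 0) := by
    intro h
    obtain ⟨a, ha1, han, ha⟩ := evals _ h
    have := hlam_inj _ _ ha
    omega
  have hne1n1 : lam 1 ≠ lam ((n:ℤ)+1) := by
    intro h
    have := hlam_inj _ _ h
    omega
  -- the operator q^2•A - q^4•A^2 + c•1 (= e1 ∘ em), pointwise
  have hBdef : ∀ u : V, (q^2 • A - q^4 • A^2 + c • (1:Module.End ℂ V)) u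
      = q^2 • A u - q^4 • A (A u) + c • u := by
    intro u
    simp [LinearMap.add_apply, LinearMap.sub_apply, LinearMap.smul_apply,
      Module.End.one_apply, hA2]
  -- main semisimplicity induction
  have main : ∀ (k : ℕ) (v : V),
      (∃ m : ℕ, ((A - lam k • (1:Module.End ℂ V))^m) v = 0) → A v = lam k • v := by
    intro k
    induction k with
    | zero =>
      rintro v ⟨m, hm⟩
      rw [Nat.cast_zero] at hm ⊢
      rw [no_eig_zero _ hlam0_ne m v hm]
      simp
    | succ k ih =>
      rintro v ⟨m, hm⟩
      push_cast at hm ⊢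
      by_cases hev : A.HasEigenvalue (lam ((k:ℤ)+1))
      · -- eigenvalue case
        obtain ⟨a, ha1, han, hμa⟩ := evals _ hev
        have hka : (k:ℤ)+1 = a := hlam_inj _ _ hμa
        have hq2μ : q^2 * lam ((k:ℤ)+1) = lam (k:ℤ) := by
          have hh := hlam_shift (k:ℤ) 1
          rw [pow_one] at hh
          rw [show (k:ℤ) + ((1:ℕ):ℤ) = (k:ℤ)+1 from by push_cast; ring] at hh
          exact hh
        have hem_pow := em_pow (lam ((k:ℤ)+1)) m v
        rw [hq2μ, hm, map_zero, smul_zero] at hem_pow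
        -- w := (A - μ•1) v is killed by (A-μ•1)^m
        have hmw : ((A - lam ((k:ℤ)+1) • (1:Module.End ℂ V))^m)
            ((A - lam ((k:ℤ)+1) • 1) v) = 0 := by
          rw [← happly, happly', hm, map_zero]
        rcases Nat.eq_zero_or_pos k with hk0 | hkpos
        · -- bottom case: μ = lam 1, here em vanishes on the whole gen. eigenspace
          subst hk0
          simp only [Nat.cast_zero, zero_add] at hm hem_pow hmw ⊢
          have hemv : em v = 0 := no_eig_zero _ hlam0_ne m (em v) hem_pow
          have hBv : q^2 • A v - q^4 • A (A v) + c • v = 0 := by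
            rw [← he1em v, hemv, map_zero]
          have hcommB' : ∀ u : V, (A - lam ((n:ℤ)+1) • (1:Module.End ℂ V)) (A u)
              = A ((A - lam ((n:ℤ)+1) • 1) u) := by
            intro u
            rw [hsub, hsub, map_sub, map_smul]
          have hbetaB' : ∀ u : V, A u = lam 1 • u →
              (A - lam ((n:ℤ)+1) • (1:Module.End ℂ V)) u = 0 → u = 0 := by
            intro u hu hBu
            rw [hsub, hu, ← sub_smul] at hBu
            rcases smul_eq_zero.mp hBu with h | h
            · exact absurd (by linear_combination h : lam 1 = lam ((n:ℤ)+1)) hne1n1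
            · exact h
          have h6 : q ^ 4 • A (A v) = q ^ 2 • A v + c • v := by
            have h7 : q ^ 2 • A v + c • v - q ^ 4 • A (A v)
                = q ^ 2 • A v - q ^ 4 • A (A v) + c • v := by abel
            rw [eq_comm, ← sub_eq_zero, h7, hBv]
          have hB'w : (A - lam ((n:ℤ)+1) • (1:Module.End ℂ V)) ((A - lam 1 • 1) v) = 0 := by
            have hexp : (A - lam ((n:ℤ)+1) • (1:Module.End ℂ V)) ((A - lam 1 • 1) v)
                = A (A v) - (lam 1 + lam ((n:ℤ)+1)) • A v + (lam 1 * lam ((n:ℤ)+1)) • v := by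
              rw [hsub, hsub, map_sub, map_smul]
              module
            rw [hexp, hsum, hprod]
            have h8 : (q^4 : ℂ) ≠ 0 := hq4
            have h9 : q^4 • (A (A v) - (q^2)⁻¹ • A v + (-c/q^4) • v) = 0 := by
              have e1 : q^4 • (A (A v) - (q^2)⁻¹ • A v + (-c/q^4) • v)
                  = q^4 • A (A v) - (q^4*(q^2)⁻¹) • A v + (q^4*(-c/q^4)) • v := by
                module
              rw [e1, h6, show q^4*(q^2)⁻¹ = q^2 from by field_simp,
                show q^4*(-c/q^4) = -c from by field_simp]
              module
            rcases smul_eq_zero.mp h9 with h | h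
            · exact absurd h h8
            · exact h
          have hw0 := keyL (A - lam ((n:ℤ)+1) • 1) (lam 1) hcommB' hbetaB' m _ hmw hB'w
          rw [hsub, sub_eq_zero] at hw0
          exact hw0
        · -- inductive case: k ≥ 1
          have hkn : (k:ℤ)+1 ≤ (n:ℤ) := by omega
          have hAemv : A (em v) = lam (k:ℤ) • em v := ih (em v) ⟨m, hem_pow⟩
          have hemw : em ((A - lam ((k:ℤ)+1) • (1:Module.End ℂ V)) v) = 0 := by
            rw [hsub, map_sub, map_smul]
            have h6 : em (A v) = (q^2)⁻¹ • A (em v) := by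
              have h := congrArg (fun (T : Module.End ℂ V) => T v) h4
              simpa [Module.End.mul_apply, LinearMap.smul_apply] using h
            rw [h6, hAemv, smul_smul]
            rw [show (q^2)⁻¹ * lam (k:ℤ) = lam ((k:ℤ)+1) from by
              rw [inv_mul_eq_iff_eq_mul₀ hq2, ← hq2μ], sub_self]
          have hcommB : ∀ u : V, (q^2 • A - q^4 • A^2 + c • (1:Module.End ℂ V)) (A u)
              = A ((q^2 • A - q^4 • A^2 + c • (1:Module.End ℂ V)) u) := by
            intro u
            rw [hBdef, hBdef, map_add, map_sub, map_smul, map_smul, map_smul]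
          have hsc : q^2 * lam ((k:ℤ)+1) - q^4 * (lam ((k:ℤ)+1))^2 + c ≠ 0 := by
            intro h0
            rcases (root_f _).mp h0 with h | h
            · have := hlam_inj _ _ h; omega
            · have := hlam_inj _ _ h; omega
          have hbetaB : ∀ u : V, A u = lam ((k:ℤ)+1) • u →
              (q^2 • A - q^4 • A^2 + c • (1:Module.End ℂ V)) u = 0 → u = 0 := by
            intro u hu hBu
            rw [hBdef] at hBu
            have hAAu : A (A u) = (lam ((k:ℤ)+1) * lam ((k:ℤ)+1)) • u := by
              rw [hu, map_smul, hu, smul_smul]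
            rw [hAAu, hu,
              show q^2 • (lam ((k:ℤ)+1) • u) - q^4 • ((lam ((k:ℤ)+1) * lam ((k:ℤ)+1)) • u) + c • u
                = (q^2 * lam ((k:ℤ)+1) - q^4 * (lam ((k:ℤ)+1))^2 + c) • u from by module] at hBu
            rcases smul_eq_zero.mp hBu with h | h
            · exact absurd h hsc
            · exact h
          have hBw : (q^2 • A - q^4 • A^2 + c • (1:Module.End ℂ V))
              ((A - lam ((k:ℤ)+1) • 1) v) = 0 := by
            have h := he1em ((A - lam ((k:ℤ)+1) • (1:Module.End ℂ V)) v)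
            rw [hemw, map_zero] at h
            rw [hBdef]
            exact h.symm
          have hw0 := keyL _ (lam ((k:ℤ)+1)) hcommB hbetaB m _ hmw hBw
          rw [hsub, sub_eq_zero] at hw0
          exact hw0
      · -- not an eigenvalue: the generalized eigenspace is trivial
        rw [no_eig_zero _ hev m v hm]
        simp
  -- final assembly
  constructor
  · have htop := Module.End.iSup_maxGenEigenspace_eq_top (K := ℂ) (V := V) A
    rw [eq_top_iff, ← htop]
    apply iSup_mono
    intro μ v hv
    rw [Module.End.mem_maxGenEigenspace] at hv
    obtain ⟨m, hm⟩ := hv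
    rw [Module.End.mem_eigenspace_iff]
    by_cases hev : A.HasEigenvalue μ
    · obtain ⟨a, ha1, han, hμa⟩ := evals μ hev
      have hk : μ = lam ((a.toNat : ℕ) : ℤ) := by
        rw [hμa]
        congr 1
        omega
      rw [hk] at hm ⊢
      exact main a.toNat v ⟨m, hm⟩
    · rw [no_eig_zero μ hev m v hm]
      simp
  · intro μ hμ
    obtain ⟨a, ha1, han, hμa⟩ := evals μ hμ
    refine ⟨a.toNat, by omega, by omega, ?_⟩
    have hk : μ = lam ((a.toNat : ℕ) : ℤ) := by
      rw [hμa]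
      congr 1
      omega
    rw [hk]
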